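/- Let λ be a cardinal such that Pr_{ω₁}(λ) holds. If B ⊆ 2^ω × 2^ω is an analytic set (in particular, a Borel set) containing a λ-square A × A with A ⊆ 2^ω of cardinality λ, then B contains a perfect square P × P with P ⊆ 2^ω a nonempty perfect set. -/

import Mathlib

open FirstOrder Cardinal

universe u

namespace Sh522

/-- `a ∈ clLt L M κ B` iff `a` is in the `<κ`-closure of `B` in `M`:
for some quantifier-free formula `φ(y, x₁, …, xₙ)` and parameters `b` from `B`,
`M ⊨ φ[a, b]` and the set of solutions of `φ(−, b)` has cardinality `< κ`. -/
def clLt (L : FirstOrder.Language.{u, u}) (M : Type u) [L.Structure M]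
    (κ : Cardinal.{u}) (B : Set M) : Set M :=
  {a | ∃ (n : ℕ) (φ : L.Formula (Fin (n + 1))),
      FirstOrder.Language.BoundedFormula.IsQF φ ∧
      ∃ b : Fin n → M, (∀ i, b i ∈ B) ∧
        φ.Realize (Fin.cons a b) ∧
        Cardinal.mk {x : M // φ.Realize (Fin.cons x b)} < κ}

/-- `rk^l(w, M; <κ) ≥ 0`. -/
def rkBase (L : FirstOrder.Language.{u, u}) (M : Type u) [L.Structure M]
    (κ : Cardinal.{u}) (w : Set M) : Prop :=
  w.Finite ∧ w.Nonempty ∧ ∀ a ∈ w, a ∉ clLt L M κ (w \ {a})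

/-- The successor step of the rank: `rk^l(w, M; <κ) ≥ β + 1` where `P` is
`rk^l(−, M; <κ) ≥ β`. -/
def rkStep (L : FirstOrder.Language.{u, u}) (M : Type u) [L.Structure M]
    (l : ℕ) (κ : Cardinal.{u}) (P : Set M → Prop) (w : Set M) : Prop :=
  w.Finite ∧ w.Nonempty ∧
  ∀ (n : ℕ) (a : Fin n → M), Function.Injective a → Set.range a = w →
    ∀ (k : Fin n) (φ : L.Formula (Fin n)),
      FirstOrder.Language.BoundedFormula.IsQF φ → φ.Realize a →
      ∃ b : Fin 2 → Fin n → M,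
        P (Set.range fun p : Fin 2 × Fin n => b p.1 p.2) ∧
        (∀ i : Fin 2, φ.Realize (b i)) ∧
        b 0 k ≠ b 1 k ∧
        (∀ m : Fin n, m ≠ k → b 0 m = b 1 m) ∧
        (l = 0 → ∀ m : Fin n, b 0 m = a m)

/-- `rkGe L M l κ α w` says `rk^l(w, M; <κ) ≥ α`. -/
noncomputable def rkGe (L : FirstOrder.Language.{u, u}) (M : Type u) [L.Structure M]
    (l : ℕ) (κ : Cardinal.{u}) (α : Ordinal.{u}) : Set M → Prop :=
  Ordinal.limitRecOn (motive := fun _ => Set M → Prop) α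
    (rkBase L M κ)
    (fun _ ih => rkStep L M l κ ih)
    (fun o _ ih w => ∀ (β : Ordinal.{u}) (h : β < o), ih β h w)

/-- `Pr l α lam bound θ` is `Pr^l_α(lam; <bound, θ)`: every model with universe of
cardinality `lam` and vocabulary of cardinality `≤ θ` has `rk^l(M; <bound) ≥ α`,
where `rk^l(M; <bound) = sup { rk^l(w, M; <bound) + 1 : w ∈ [M]* }`. -/
def Pr (l : ℕ) (α : Ordinal.{u}) (lam bound θ : Cardinal.{u}) : Prop :=
  ∀ (L : FirstOrder.Language.{u, u}) (M : Type u) (S : L.Structure M),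
    Cardinal.mk M = lam → L.card ≤ θ →
    ∀ β < α, ∃ w : Set M, w.Finite ∧ w.Nonempty ∧ @rkGe L M S l bound β w






/-- Finite configuration: `N` points, binary approximations of length `k`,
witness approximations of length `m`. -/
structure Cfg : Type where
  N : ℕ
  k : ℕ
  m : ℕ
  s : Fin N → List Bool
  u : Fin N → Fin N → List ℕ

def prefB (l : List Bool) (x : ℕ → Bool) : Prop := ∀ t, (h : t < l.length) → l[t] = x t
def prefS (l : List ℕ) (x : ℕ → ℕ) : Prop := ∀ t, (h : t < l.length) → l[t] = x t

def Cfg.Ok (q : Cfg) : Prop :=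
  (∀ i, (q.s i).length = q.k) ∧ (∀ i j, (q.u i j).length = q.m) ∧ Function.Injective q.s

section WithF
variable (f : (ℕ → ℕ) → (ℕ → Bool) × (ℕ → Bool))

def CfgBase (q : Cfg) : Prop :=
  ∀ i j, ∃ ν, prefS (q.u i j) ν ∧ prefB (q.s i) (f ν).1 ∧ prefB (q.s j) (f ν).2

end WithF

def par (q : Cfg) (i0 : Fin q.N) {N' : ℕ} (j : Fin N') : Fin q.N :=
  if h : (j : ℕ) < q.N then ⟨j, h⟩ else i0

def Ext (q q' : Cfg) (i0 : Fin q.N) (K M : ℕ) : Prop :=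
  q'.N = q.N + 1 ∧ K ≤ q'.k ∧ M ≤ q'.m ∧
    (∀ j : Fin q'.N, q.s (par q i0 j) <+: q'.s j) ∧
    (∀ j j' : Fin q'.N, (par q i0 j ≠ par q i0 j' ∨ j = j') →
       q.u (par q i0 j) (par q i0 j') <+: q'.u j j')

noncomputable local instance : WellFoundedRelation Ordinal.{0} := ⟨(· < ·), Ordinal.lt_wf⟩

def Dmem (f : (ℕ → ℕ) → (ℕ → Bool) × (ℕ → Bool)) (β : Ordinal.{0}) (q : Cfg) : Prop :=
  q.Ok ∧ CfgBase f q ∧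
    ∀ γ < β, ∀ (i0 : Fin q.N) (K M : ℕ), ∃ q', Dmem f γ q' ∧ Ext q q' i0 K M
termination_by β
decreasing_by assumption

lemma Dmem_mono {f} {γ β : Ordinal.{0}} (h : γ ≤ β) {q : Cfg} (hq : Dmem f β q) :
    Dmem f γ q := by
  rw [Dmem] at hq ⊢
  exact ⟨hq.1, hq.2.1, fun δ hδ => hq.2.2 δ (lt_of_lt_of_le hδ h)⟩

private def cfgEnc (q : Cfg) :
    Σ (N : ℕ), ℕ × ℕ × (Fin N → List Bool) × (Fin N → Fin N → List ℕ) :=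
  ⟨q.N, q.k, q.m, q.s, q.u⟩

instance : Countable Cfg := by
  have h : Function.Injective cfgEnc := by
    rintro ⟨N, k, m, s, u⟩ ⟨N', k', m', s', u'⟩ h
    obtain ⟨rfl, h2⟩ : N = N' ∧ HEq (k, m, s, u) (k', m', s', u') :=
      Sigma.mk.inj_iff.mp h
    obtain ⟨rfl, rfl, rfl, rfl⟩ : k = k' ∧ m = m' ∧ s = s' ∧ u = u' := by
      simpa [Prod.ext_iff] using h2
    rfl
  exact h.countable




def Idx : Type := List Bool × List Bool × List ℕ

instance : Countable Idx := by unfold Idx; infer_instance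


def Lg : FirstOrder.Language.{0, 0} :=
  ⟨fun _ => Empty, fun n => match n with | 2 => Idx | _ => Empty⟩

instance (n : ℕ) : Countable (Lg.Functions n) := by
  exact inferInstanceAs (Countable Empty)

instance (n : ℕ) : Countable (Lg.Relations n) := by
  match n with
  | 0 => exact inferInstanceAs (Countable Empty)
  | 1 => exact inferInstanceAs (Countable Empty)
  | 2 => exact inferInstanceAs (Countable Idx)
  | (n+3) => exact inferInstanceAs (Countable Empty)

instance : Countable Lg.Symbols := by
  unfold Language.Symbols
  infer_instance

lemma Lg_card : Lg.card ≤ ℵ₀ :=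
  Cardinal.mk_le_aleph0

section Str
variable (A : Set (ℕ → Bool)) (η : ↥A → ↥A → (ℕ → ℕ))

def Str : Lg.Structure ↥A where
  funMap {n} F _ := Empty.elim F
  RelMap {n} :=
    match n with
    | 0 => fun r _ => Empty.elim r
    | 1 => fun r _ => Empty.elim r
    | 2 => fun (r : Idx) v => prefB r.1 (v 0).1 ∧ prefB r.2.1 (v 1).1 ∧ prefS r.2.2 (η (v 0) (v 1))
    | (n+3) => fun r _ => Empty.elim r

def trm {N : ℕ} (i : Fin N) : Lg.Term (Fin N ⊕ Fin 0) := Language.Term.var (Sum.inl i)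

def idxRel (r : Idx) : Lg.Relations 2 := r

def atomF {N : ℕ} (r : Idx) (i j : Fin N) : Lg.Formula (Fin N) :=
  Language.Relations.boundedFormula (idxRel r) ![trm i, trm j]

def neqF {N : ℕ} (i j : Fin N) : Lg.Formula (Fin N) :=
  Language.BoundedFormula.not (Language.Term.bdEqual (trm i) (trm j))

lemma atomF_isQF {N : ℕ} (r : Idx) (i j : Fin N) : (atomF r i j).IsQF :=
  (Language.BoundedFormula.IsAtomic.rel _ _).isQF

lemma neqF_isQF {N : ℕ} (i j : Fin N) : (neqF i j).IsQF :=
  ((Language.BoundedFormula.IsAtomic.equal _ _).isQF).imp Language.BoundedFormula.IsQF.falsum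

lemma atomF_realize {N : ℕ} (r : Idx) (i j : Fin N) (v : Fin N → ↥A) :
    (@Language.Formula.Realize Lg ↥A (Str A η) _ (atomF r i j) v) ↔
      (prefB r.1 (v i).1 ∧ prefB r.2.1 (v j).1 ∧ prefS r.2.2 (η (v i) (v j))) := by
  letI := Str A η
  rw [atomF, Language.Formula.Realize, Language.BoundedFormula.realize_rel]
  exact Iff.rfl

lemma neqF_realize {N : ℕ} (i j : Fin N) (v : Fin N → ↥A) :
    (@Language.Formula.Realize Lg ↥A (Str A η) _ (neqF i j) v) ↔ v i ≠ v j := by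
  letI := Str A η
  rw [neqF, Language.Formula.Realize]
  simp [Language.BoundedFormula.realize_not, Language.BoundedFormula.realize_bdEqual, trm]

end Str

/-- Finite conjunction of formulas. -/
def conjL {α : Type} : List (Lg.Formula α) → Lg.Formula α
  | [] => Language.BoundedFormula.not ⊥
  | φ :: l => Language.BoundedFormula.not
      (φ.imp (Language.BoundedFormula.not (conjL l)))

lemma conjL_isQF {α : Type} (l : List (Lg.Formula α)) (h : ∀ φ ∈ l, φ.IsQF) :
    (conjL l).IsQF := by
  induction l with
  | nil => exact Language.BoundedFormula.IsQF.falsum.imp Language.BoundedFormula.IsQF.falsum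
  | cons φ l ih =>
      exact ((h φ (by simp)).imp (((ih (fun ψ hψ => h ψ (by simp [hψ]))).imp
        Language.BoundedFormula.IsQF.falsum))).imp Language.BoundedFormula.IsQF.falsum

lemma conjL_realize {α : Type} {M : Type} (S : Lg.Structure M) (l : List (Lg.Formula α))
    (v : α → M) : (@Language.Formula.Realize Lg M S _ (conjL l) v) ↔
      ∀ φ ∈ l, @Language.Formula.Realize Lg M S _ φ v := by
  letI := S
  induction l with
  | nil => simp [conjL, Language.Formula.Realize]
  | cons φ l ih =>
      have key : (conjL (φ :: l)).Realize v ↔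
          (φ.Realize v ∧ (conjL l).Realize v) := by
        rw [conjL, Language.Formula.Realize]
        simp only [Language.BoundedFormula.realize_not, Language.BoundedFormula.realize_imp]
        change ¬(φ.Realize v → ¬ (conjL l).Realize v) ↔ _
        tauto
      rw [key]
      constructor
      · rintro ⟨h1, h2⟩ ψ hψ
        rcases List.mem_cons.mp hψ with rfl | hψ'
        · exact h1
        · exact (ih.mp h2) ψ hψ'
      · intro h
        exact ⟨h φ List.mem_cons_self,
          ih.mpr fun ψ hψ => h ψ (List.mem_cons_of_mem _ hψ)⟩


section Sound

lemma ofFn_prefix {α : Type} (x y : ℕ → α) {k k' : ℕ} (hk : k ≤ k')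
    (h : ∀ t < k, x t = y t) :
    List.ofFn (fun t : Fin k => x t) <+: List.ofFn (fun t : Fin k' => y t) := by
  rw [List.prefix_iff_eq_take]
  apply List.ext_getElem
  · simp [hk]
  · intro t h1 h2
    simp only [List.getElem_ofFn, List.getElem_take]
    simp only [List.length_ofFn] at h1
    exact h t h1

lemma prefB_ofFn (x : ℕ → Bool) (k : ℕ) (y : ℕ → Bool) :
    prefB (List.ofFn fun t : Fin k => x t) y ↔ ∀ t < k, x t = y t := by
  unfold prefB
  simp only [List.length_ofFn, List.getElem_ofFn]

lemma prefS_ofFn (x : ℕ → ℕ) (k : ℕ) (y : ℕ → ℕ) :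
    prefS (List.ofFn fun t : Fin k => x t) y ↔ ∀ t < k, x t = y t := by
  unfold prefS
  simp only [List.length_ofFn, List.getElem_ofFn]

lemma sep_bound {n : ℕ} (d : Fin n → (ℕ → Bool)) (hd : Function.Injective d) :
    ∃ k0, ∀ i j, i ≠ j → ∃ t, t < k0 ∧ d i t ≠ d j t := by
  classical
  have he : ∀ p : Fin n × Fin n, p.1 ≠ p.2 → ∃ t, d p.1 t ≠ d p.2 t := by
    intro p hp
    by_contra hc
    push_neg at hc
    exact hp (hd (funext hc))
  let g : Fin n × Fin n → ℕ := fun p => if h : p.1 = p.2 then 0 else Nat.find (he p h)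
  refine ⟨(Finset.univ.sup g) + 1, fun i j hij => ?_⟩
  refine ⟨Nat.find (he (i, j) hij), ?_, Nat.find_spec (he (i, j) hij)⟩
  have h1 : g (i, j) = Nat.find (he (i, j) hij) := dif_neg hij
  have h2 : g (i, j) ≤ Finset.univ.sup g := Finset.le_sup (Finset.mem_univ _)
  omega

variable {L' : FirstOrder.Language.{u, u}} {M' : Type u} [S' : L'.Structure M']

lemma rkGe_succ (l : ℕ) (κ : Cardinal.{u}) (β0 : Ordinal.{u}) :
    rkGe L' M' l κ (Order.succ β0) = rkStep L' M' l κ (rkGe L' M' l κ β0) := by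
  unfold rkGe
  exact Ordinal.limitRecOn_succ _ _ _ _

lemma rkGe_limit (l : ℕ) (κ : Cardinal.{u}) {o : Ordinal.{u}} (ho : Order.IsSuccLimit o) :
    rkGe L' M' l κ o = fun w => ∀ β' < o, rkGe L' M' l κ β' w := by
  unfold rkGe
  exact Ordinal.limitRecOn_limit _ _ _ _ ho

section SoundMain

variable (f : (ℕ → ℕ) → (ℕ → Bool) × (ℕ → Bool))
variable (A : Set (ℕ → Bool)) (η : ↥A → ↥A → (ℕ → ℕ))

@[reducible] def mkCfg {N : ℕ} (c : Fin N → ↥A) (k m : ℕ) : Cfg :=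
  ⟨N, k, m, fun i => List.ofFn (fun t : Fin k => (c i).1 t),
    fun i j => List.ofFn (fun t : Fin m => η (c i) (c j) t)⟩

@[simp] lemma mkCfg_N {N : ℕ} (c : Fin N → ↥A) (k m : ℕ) : (mkCfg A η c k m).N = N := rfl
@[simp] lemma mkCfg_k {N : ℕ} (c : Fin N → ↥A) (k m : ℕ) : (mkCfg A η c k m).k = k := rfl
@[simp] lemma mkCfg_m {N : ℕ} (c : Fin N → ↥A) (k m : ℕ) : (mkCfg A η c k m).m = m := rfl
@[simp] lemma mkCfg_s {N : ℕ} (c : Fin N → ↥A) (k m : ℕ) (i : Fin N) :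
    (mkCfg A η c k m).s i = List.ofFn (fun t : Fin k => (c i).1 t) := rfl
@[simp] lemma mkCfg_u {N : ℕ} (c : Fin N → ↥A) (k m : ℕ) (i j : Fin N) :
    (mkCfg A η c k m).u i j = List.ofFn (fun t : Fin m => η (c i) (c j) t) := rfl

lemma soundStep (γ : Ordinal.{0}) (w : Set ↥A)
    (hstep : @rkStep Lg ↥A (Str A η) 0 (Cardinal.aleph 1)
      (@rkGe Lg ↥A (Str A η) 0 (Cardinal.aleph 1) γ) w)
    (IH : ∀ w', @rkGe Lg ↥A (Str A η) 0 (Cardinal.aleph 1) γ w' →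
      ∀ (N : ℕ) (c : Fin N → ↥A) (k m : ℕ), Function.Injective c → Set.range c = w' →
      (∀ i j, i ≠ j → ∃ t, t < k ∧ (c i).1 t ≠ (c j).1 t) → Dmem f γ (mkCfg A η c k m))
    (N : ℕ) (c : Fin N → ↥A) (k m : ℕ) (hcinj : Function.Injective c)
    (hcr : Set.range c = w)
    (hsep : ∀ i j, i ≠ j → ∃ t, t < k ∧ (c i).1 t ≠ (c j).1 t)
    (i0 : Fin N) (K M : ℕ) :
    ∃ q', Dmem f γ q' ∧ Ext (mkCfg A η c k m) q' i0 K M := by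
  classical
  set KK := max k K with hKK
  set MM := max m M with hMM
  let idx : Fin N → Fin N → Idx := fun i j =>
    (List.ofFn fun t : Fin KK => (c i).1 t,
     List.ofFn fun t : Fin KK => (c j).1 t,
     List.ofFn fun t : Fin MM => η (c i) (c j) t)
  let atoms : List (Lg.Formula (Fin N)) :=
    (List.finRange N).flatMap fun i => (List.finRange N).map fun j => atomF (idx i j) i j
  let neqs : List (Lg.Formula (Fin N)) :=
    (List.finRange N).flatMap fun i => (List.finRange N).flatMap fun j =>
      if i = j then [] else [neqF i j]
  let φ := conjL (atoms ++ neqs)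
  have hmematoms : ∀ ψ ∈ atoms, ∃ i j, ψ = atomF (idx i j) i j := by
    intro ψ hψ
    simp only [atoms, List.mem_flatMap, List.mem_map, List.mem_finRange] at hψ
    obtain ⟨i, -, j, -, rfl⟩ := hψ
    exact ⟨i, j, rfl⟩
  have hmemneqs : ∀ ψ ∈ neqs, ∃ i j, i ≠ j ∧ ψ = neqF i j := by
    intro ψ hψ
    simp only [neqs, List.mem_flatMap, List.mem_finRange] at hψ
    obtain ⟨i, -, j, -, hmem⟩ := hψ
    by_cases hij : i = j
    · simp [hij] at hmem
    · simp [hij] at hmem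
      exact ⟨i, j, hij, hmem⟩
  have hqf : φ.IsQF := by
    apply conjL_isQF
    intro ψ hψ
    rcases List.mem_append.mp hψ with h | h
    · obtain ⟨i, j, rfl⟩ := hmematoms ψ h
      exact atomF_isQF _ _ _
    · obtain ⟨i, j, -, rfl⟩ := hmemneqs ψ h
      exact neqF_isQF _ _
  have hatommem : ∀ i j : Fin N, atomF (idx i j) i j ∈ atoms := by
    intro i j
    simp only [atoms, List.mem_flatMap, List.mem_map, List.mem_finRange]
    exact ⟨i, trivial, j, trivial, rfl⟩
  have hneqmem : ∀ i j : Fin N, i ≠ j → neqF i j ∈ neqs := by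
    intro i j hij
    simp only [neqs, List.mem_flatMap, List.mem_finRange]
    refine ⟨i, trivial, j, trivial, ?_⟩
    simp [hij]
  have hφc : @FirstOrder.Language.Formula.Realize Lg ↥A (Str A η) _ φ c := by
    rw [conjL_realize (Str A η)]
    intro ψ hψ
    rcases List.mem_append.mp hψ with h | h
    · obtain ⟨i, j, rfl⟩ := hmematoms ψ h
      rw [atomF_realize]
      refine ⟨?_, ?_, ?_⟩
      · rw [show (idx i j).1 = List.ofFn fun t : Fin KK => (c i).1 t from rfl, prefB_ofFn]
        intro t _; rfl
      · rw [show (idx i j).2.1 = List.ofFn fun t : Fin KK => (c j).1 t from rfl, prefB_ofFn]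
        intro t _; rfl
      · rw [show (idx i j).2.2 = List.ofFn fun t : Fin MM => η (c i) (c j) t from rfl, prefS_ofFn]
        intro t _; rfl
    · obtain ⟨i, j, hij, rfl⟩ := hmemneqs ψ h
      rw [neqF_realize]
      intro he
      exact hij (hcinj he)
  obtain ⟨b, hbP, hbR, hbne, hbeq, hb0⟩ := hstep.2.2 N c hcinj hcr i0 φ hqf hφc
  have hb0' : ∀ j, b 0 j = c j := hb0 rfl
  have hb1 : ∀ j, j ≠ i0 → b 1 j = c j := fun j hj => ((hbeq j hj).symm).trans (hb0' j)
  set a' := b 1 i0 with ha'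
  have hreal1 := (conjL_realize (Str A η) (atoms ++ neqs) (b 1)).mp (hbR 1)
  have hA1 : ∀ i j : Fin N,
      prefB (idx i j).1 (b 1 i).1 ∧ prefB (idx i j).2.1 (b 1 j).1 ∧
        prefS (idx i j).2.2 (η (b 1 i) (b 1 j)) := by
    intro i j
    have := hreal1 _ (List.mem_append.mpr (Or.inl (hatommem i j)))
    rwa [atomF_realize] at this
  have hbinj : ∀ i j : Fin N, i ≠ j → b 1 i ≠ b 1 j := by
    intro i j hij
    have := hreal1 _ (List.mem_append.mpr (Or.inr (hneqmem i j hij)))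
    rwa [neqF_realize] at this
  have fact1 : ∀ t < KK, (c i0).1 t = a'.1 t := by
    have h := (hA1 i0 i0).1
    rw [show (idx i0 i0).1 = List.ofFn fun t : Fin KK => (c i0).1 t from rfl, prefB_ofFn] at h
    exact h
  have factu : ∀ i j : Fin N, ∀ t < MM, η (c i) (c j) t = η (b 1 i) (b 1 j) t := by
    intro i j
    have h := (hA1 i j).2.2
    rw [show (idx i j).2.2 = List.ofFn fun t : Fin MM => η (c i) (c j) t from rfl, prefS_ofFn] at h
    exact h
  let c' : Fin (N + 1) → ↥A := fun j => if h : (j : ℕ) < N then c ⟨j, h⟩ else a'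
  have hc'lt : ∀ (j : Fin (N + 1)) (h : (j : ℕ) < N), c' j = c ⟨j, h⟩ := fun j h => dif_pos h
  have hc'ge : ∀ (j : Fin (N + 1)), ¬ ((j : ℕ) < N) → c' j = a' := fun j h => dif_neg h
  have hca' : ∀ (jj : Fin N), c jj ≠ a' := by
    intro jj he
    by_cases hji : jj = i0
    · subst hji
      exact hbne ((hb0' jj).trans he)
    · exact hbinj jj i0 hji ((hb1 jj hji).trans he)
  have hc'inj : Function.Injective c' := by
    intro j j' he
    by_cases h : (j : ℕ) < N <;> by_cases h' : (j' : ℕ) < N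
    · rw [hc'lt j h, hc'lt j' h'] at he
      have := hcinj he
      apply Fin.ext
      simpa [Fin.ext_iff] using this
    · rw [hc'lt j h, hc'ge j' h'] at he
      exact absurd he (hca' _)
    · rw [hc'ge j h, hc'lt j' h'] at he
      exact absurd he.symm (hca' _)
    · apply Fin.ext
      omega
  have hrange : (Set.range fun p : Fin 2 × Fin N => b p.1 p.2) = Set.range c' := by
    ext x
    constructor
    · rintro ⟨⟨i, jj⟩, rfl⟩
      simp only
      fin_cases i
      · refine ⟨⟨(jj : ℕ), by omega⟩, ?_⟩
        rw [hc'lt _ (by simpa using jj.2)]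
        simp [hb0']
      · by_cases hji : jj = i0
        · subst hji
          exact ⟨⟨N, by omega⟩, by rw [hc'ge _ (by simp)]; rfl⟩
        · refine ⟨⟨(jj : ℕ), by omega⟩, ?_⟩
          rw [hc'lt _ (by simpa using jj.2)]
          simp [hb1 jj hji]
    · rintro ⟨j, rfl⟩
      by_cases h : (j : ℕ) < N
      · exact ⟨(0, ⟨j, h⟩), by rw [hc'lt j h]; exact hb0' _⟩
      · exact ⟨(1, i0), by rw [hc'ge j h]⟩
  have hge' : @rkGe Lg ↥A (Str A η) 0 (Cardinal.aleph 1) γ (Set.range c') := by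
    rwa [hrange] at hbP
  obtain ⟨k0, hk0⟩ := sep_bound (fun j => (c' j).1)
    (fun j j' he => hc'inj (Subtype.ext he))
  set k' := max KK k0 with hk'
  have hsep' : ∀ i j : Fin (N + 1), i ≠ j → ∃ t, t < k' ∧ (c' i).1 t ≠ (c' j).1 t := by
    intro i j hij
    obtain ⟨t, ht, hne⟩ := hk0 i j hij
    exact ⟨t, lt_of_lt_of_le ht (le_max_right _ _), hne⟩
  have hD : Dmem f γ (mkCfg A η c' k' MM) := IH _ hge' (N + 1) c' k' MM hc'inj rfl hsep'
  refine ⟨mkCfg A η c' k' MM, hD, ?_⟩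
  refine ⟨rfl, le_trans (le_max_right k K) (le_max_left KK k0), le_max_right m M, ?_, ?_⟩
  · intro j
    simp only [mkCfg_s]
    unfold par
    by_cases h : (j : ℕ) < N
    · rw [dif_pos (show ((j : ℕ) < (mkCfg A η c k m).N) from h)]
      apply ofFn_prefix _ _ (le_trans (le_max_left k K) (le_max_left KK k0))
      intro t _
      rw [hc'lt j h]
    · rw [dif_neg (show ¬ ((j : ℕ) < (mkCfg A η c k m).N) from h)]
      apply ofFn_prefix _ _ (le_trans (le_max_left k K) (le_max_left KK k0))
      intro t ht
      rw [hc'ge j h]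
      exact fact1 t (lt_of_lt_of_le ht (le_max_left k K))
  · intro j j' hcond
    simp only [mkCfg_u]
    unfold par at hcond ⊢
    by_cases h : (j : ℕ) < N <;> by_cases h' : (j' : ℕ) < N
    · rw [dif_pos (show ((j : ℕ) < (mkCfg A η c k m).N) from h),
        dif_pos (show ((j' : ℕ) < (mkCfg A η c k m).N) from h')]
      apply ofFn_prefix _ _ (le_max_left m M)
      intro t _
      rw [hc'lt j h, hc'lt j' h']
    · rw [dif_pos (show ((j : ℕ) < (mkCfg A η c k m).N) from h),
        dif_neg (show ¬ ((j' : ℕ) < (mkCfg A η c k m).N) from h')]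
      have hpar : (⟨(j : ℕ), h⟩ : Fin N) ≠ i0 := by
        rcases hcond with hc1 | hc2
        · rw [dif_pos (show ((j : ℕ) < (mkCfg A η c k m).N) from h),
            dif_neg (show ¬ ((j' : ℕ) < (mkCfg A η c k m).N) from h')] at hc1
          exact hc1
        · exfalso
          rw [hc2] at h
          exact h' h
      apply ofFn_prefix _ _ (le_max_left m M)
      intro t ht
      rw [hc'lt j h, hc'ge j' h']
      have := factu ⟨(j : ℕ), h⟩ i0 t (lt_of_lt_of_le ht (le_max_left m M))
      rwa [hb1 _ hpar] at this
    · rw [dif_neg (show ¬ ((j : ℕ) < (mkCfg A η c k m).N) from h),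
        dif_pos (show ((j' : ℕ) < (mkCfg A η c k m).N) from h')]
      have hpar : i0 ≠ (⟨(j' : ℕ), h'⟩ : Fin N) := by
        rcases hcond with hc1 | hc2
        · rw [dif_neg (show ¬ ((j : ℕ) < (mkCfg A η c k m).N) from h),
            dif_pos (show ((j' : ℕ) < (mkCfg A η c k m).N) from h')] at hc1
          exact hc1
        · exfalso
          rw [← hc2] at h'
          exact h h'
      apply ofFn_prefix _ _ (le_max_left m M)
      intro t ht
      rw [hc'ge j h, hc'lt j' h']
      have := factu i0 ⟨(j' : ℕ), h'⟩ t (lt_of_lt_of_le ht (le_max_left m M))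
      rwa [hb1 _ (Ne.symm hpar)] at this
    · rw [dif_neg (show ¬ ((j : ℕ) < (mkCfg A η c k m).N) from h),
        dif_neg (show ¬ ((j' : ℕ) < (mkCfg A η c k m).N) from h')]
      apply ofFn_prefix _ _ (le_max_left m M)
      intro t ht
      rw [hc'ge j h, hc'ge j' h']
      exact factu i0 i0 t (lt_of_lt_of_le ht (le_max_left m M))

theorem sound (hη : ∀ x y : ↥A, f (η x y) = ((x : ℕ → Bool), (y : ℕ → Bool)))
    (β : Ordinal.{0}) :
    ∀ (w : Set ↥A), @rkGe Lg ↥A (Str A η) 0 (Cardinal.aleph 1) β w →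
    ∀ (N : ℕ) (c : Fin N → ↥A) (k m : ℕ), Function.Injective c → Set.range c = w →
    (∀ i j, i ≠ j → ∃ t, t < k ∧ (c i).1 t ≠ (c j).1 t) →
    Dmem f β (mkCfg A η c k m) := by
  induction β using Ordinal.induction with
  | h β IHβ =>
  intro w hw N c k m hcinj hcr hsep
  rw [Dmem]
  refine ⟨⟨fun i => by simp, fun i j => by simp, ?_⟩, ?_, ?_⟩
  · -- s injective
    intro i j he
    by_contra hne
    obtain ⟨t, htk, hd⟩ := hsep i j hne
    apply hd
    simp only [mkCfg_s] at he
    have := List.ofFn_injective he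
    exact congrFun this ⟨t, htk⟩
  · -- base
    intro i j
    refine ⟨η (c i) (c j), ?_, ?_, ?_⟩
    · rw [mkCfg_u, prefS_ofFn]
      intro t _; rfl
    · rw [mkCfg_s, hη, prefB_ofFn]
      intro t _; rfl
    · rw [mkCfg_s, hη, prefB_ofFn]
      intro t _; rfl
  · -- step
    intro γ hγ i0 K M
    obtain ⟨γ', hγle, hγ'lt, hstep⟩ : ∃ γ', γ ≤ γ' ∧ γ' < β ∧
        @rkStep Lg ↥A (Str A η) 0 (Cardinal.aleph 1)
          (@rkGe Lg ↥A (Str A η) 0 (Cardinal.aleph 1) γ') w := by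
      rcases Ordinal.zero_or_succ_or_isSuccLimit β with rfl | ⟨β0, rfl⟩ | hlim
      · exact absurd hγ (not_lt_zero (a := γ))
      · refine ⟨β0, Order.lt_succ_iff.mp hγ, Order.lt_succ β0, ?_⟩
        rwa [rkGe_succ (S' := Str A η)] at hw
      · refine ⟨γ, le_rfl, hγ, ?_⟩
        rw [rkGe_limit (S' := Str A η) 0 (Cardinal.aleph 1) hlim] at hw
        have := hw (Order.succ γ) (hlim.succ_lt hγ)
        rwa [rkGe_succ (S' := Str A η)] at this
    obtain ⟨q', hq', hext⟩ := soundStep f A η γ' w hstep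
      (fun w' hw' => IHβ γ' hγ'lt w' hw') N c k m hcinj hcr hsep i0 K M
    exact ⟨q', Dmem_mono hγle hq', hext⟩

end SoundMain

end Sound

section Construct

variable (f : (ℕ → ℕ) → (ℕ → Bool) × (ℕ → Bool))

def GoodSet (G : Set Cfg) : Prop :=
  (∀ q ∈ G, q.Ok ∧ CfgBase f q) ∧
  (∀ q ∈ G, ∀ (i0 : Fin q.N) (K M : ℕ), ∃ q' ∈ G, Ext q q' i0 K M)

def mpar (q : Cfg) {T : ℕ} (g : Fin T → Fin q.N) {N' : ℕ} (hN : N' = q.N + T)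
    (j : Fin N') : Fin q.N :=
  if h : (j : ℕ) < q.N then ⟨j, h⟩ else g ⟨(j : ℕ) - q.N, by omega⟩

lemma splitMany {G : Set Cfg} (hG : GoodSet f G) (T : ℕ) :
    ∀ (q : Cfg), q ∈ G → ∀ (g : Fin T → Fin q.N) (K M : ℕ),
    ∃ q', q' ∈ G ∧ ∃ hN : q'.N = q.N + T,
      (0 < T → K ≤ q'.k ∧ M ≤ q'.m) ∧
      (∀ j : Fin q'.N, q.s (mpar q g hN j) <+: q'.s j) ∧
      (∀ j j' : Fin q'.N, (mpar q g hN j ≠ mpar q g hN j' ∨ j = j') →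
         q.u (mpar q g hN j) (mpar q g hN j') <+: q'.u j j') := by
  induction T with
  | zero =>
    intro q hq g K M
    have hmp : ∀ j : Fin q.N, mpar q g (rfl : q.N = q.N + 0) j = j := by
      intro j
      unfold mpar
      rw [dif_pos j.2]
    refine ⟨q, hq, rfl, fun h => absurd h (lt_irrefl 0), ?_, ?_⟩
    · intro j; rw [hmp j]
    · intro j j' _; rw [hmp j, hmp j']
  | succ T IH =>
    intro q hq g K M
    obtain ⟨q₁, hq₁, hN₁, _, hs₁, hu₁⟩ := IH q hq (fun t => g t.castSucc) K M
    have hlast : ((g (Fin.last T)) : ℕ) < q₁.N := by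
      have := (g (Fin.last T)).2; omega
    obtain ⟨q', hq', hext⟩ := hG.2 q₁ hq₁ ⟨(g (Fin.last T) : ℕ), hlast⟩ K M
    obtain ⟨hN', hK', hM', hs', hu'⟩ := hext
    have hN : q'.N = q.N + (T + 1) := by omega
    have hcomp : ∀ j : Fin q'.N,
        mpar q g hN j = mpar q (fun t => g t.castSucc) hN₁
          (par q₁ ⟨(g (Fin.last T) : ℕ), hlast⟩ j) := by
      intro j
      unfold mpar par
      by_cases h1 : (j : ℕ) < q₁.N
      · rw [dif_pos h1]
        by_cases h2 : (j : ℕ) < q.N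
        · rw [dif_pos h2, dif_pos (show ((⟨(j : ℕ), h1⟩ : Fin q₁.N) : ℕ) < q.N from h2)]
        · rw [dif_neg h2, dif_neg (show ¬ ((⟨(j : ℕ), h1⟩ : Fin q₁.N) : ℕ) < q.N from h2)]
          exact congrArg g (Fin.ext rfl)
      · rw [dif_neg h1,
          dif_pos (show ((⟨(g (Fin.last T) : ℕ), hlast⟩ : Fin q₁.N) : ℕ) < q.N from
            (g (Fin.last T)).2)]
        have hj : (j : ℕ) = q.N + T := by
          have := j.2; omega
        rw [dif_neg (show ¬ (j : ℕ) < q.N by omega)]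
        have h3 : (⟨(j : ℕ) - q.N, by omega⟩ : Fin (T + 1)) = Fin.last T := by
          apply Fin.ext; simp [hj]
        rw [h3]
    refine ⟨q', hq', hN, fun _ => ⟨hK', hM'⟩, ?_, ?_⟩
    · intro j
      rw [hcomp j]
      exact (hs₁ _).trans (hs' j)
    · intro j j' hcond
      rw [hcomp j, hcomp j']
      have hcond2 : par q₁ ⟨(g (Fin.last T) : ℕ), hlast⟩ j ≠
          par q₁ ⟨(g (Fin.last T) : ℕ), hlast⟩ j' ∨ j = j' := by
        rcases hcond with hc | hc
        · by_cases hjj : j = j'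
          · exact Or.inr hjj
          · refine Or.inl (fun he => hc ?_)
            rw [hcomp j, hcomp j', he]
        · exact Or.inr hc
      have hcond1 : mpar q (fun t => g t.castSucc) hN₁
            (par q₁ ⟨(g (Fin.last T) : ℕ), hlast⟩ j) ≠
          mpar q (fun t => g t.castSucc) hN₁
            (par q₁ ⟨(g (Fin.last T) : ℕ), hlast⟩ j') ∨
          par q₁ ⟨(g (Fin.last T) : ℕ), hlast⟩ j =
            par q₁ ⟨(g (Fin.last T) : ℕ), hlast⟩ j' := by
        rcases hcond with hc | hc
        · by_cases hpp : par q₁ ⟨(g (Fin.last T) : ℕ), hlast⟩ j =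
              par q₁ ⟨(g (Fin.last T) : ℕ), hlast⟩ j'
          · exact Or.inr hpp
          · refine Or.inl (fun he => hc ?_)
            rw [hcomp j, hcomp j', he]
        · subst hc
          exact Or.inr rfl
      exact (hu₁ _ _ hcond1).trans (hu' j j' hcond2)

structure StD (G : Set Cfg) (n : ℕ) where
  q : Cfg
  hq : q ∈ G
  ι : (Fin n → Bool) → ℕ
  hlt : ∀ ρ, ι ρ < q.N
  hinj : Function.Injective ι
  hk : n ≤ q.k
  hm : n ≤ q.m

def StLink {G : Set Cfg} {n : ℕ} (p : StD G n) (p' : StD G (n + 1)) : Prop :=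
  (∀ ψ : Fin (n + 1) → Bool,
     p.q.s ⟨p.ι (Fin.init ψ), p.hlt _⟩ <+: p'.q.s ⟨p'.ι ψ, p'.hlt _⟩) ∧
  (∀ ψ ψ' : Fin (n + 1) → Bool, (Fin.init ψ ≠ Fin.init ψ' ∨ ψ = ψ') →
     p.q.u ⟨p.ι (Fin.init ψ), p.hlt _⟩ ⟨p.ι (Fin.init ψ'), p.hlt _⟩ <+:
       p'.q.u ⟨p'.ι ψ, p'.hlt _⟩ ⟨p'.ι ψ', p'.hlt _⟩)

lemma stStep {G : Set Cfg} (hG : GoodSet f G) (n : ℕ) (p : StD G n) :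
    ∃ p' : StD G (n + 1), StLink p p' := by
  classical
  have e : (Fin n → Bool) ≃ Fin (2 ^ n) :=
    (Equiv.arrowCongr (Equiv.refl (Fin n)) finTwoEquiv.symm).trans finFunctionFinEquiv
  have hpow : 0 < 2 ^ n := Nat.pow_pos (by norm_num)
  set g : Fin (2 ^ n) → Fin p.q.N := fun t => ⟨p.ι (e.symm t), p.hlt _⟩ with hg
  obtain ⟨q', hq', hN, hKM, hs, hu⟩ := splitMany f hG (2 ^ n) p.q p.hq g (n + 1) (n + 1)
  set ι' : (Fin (n + 1) → Bool) → ℕ := fun ψ =>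
    if ψ (Fin.last n) = false then p.ι (Fin.init ψ) else p.q.N + (e (Fin.init ψ) : ℕ)
    with hι'
  have hlt' : ∀ ψ, ι' ψ < q'.N := by
    intro ψ
    show (if ψ (Fin.last n) = false then p.ι (Fin.init ψ)
      else p.q.N + (e (Fin.init ψ) : ℕ)) < q'.N
    by_cases hb : ψ (Fin.last n) = false
    · rw [if_pos hb]
      have := p.hlt (Fin.init ψ); omega
    · rw [if_neg hb]
      have := (e (Fin.init ψ)).2; omega
  have hmpar : ∀ ψ : Fin (n + 1) → Bool,
      mpar p.q g hN ⟨ι' ψ, hlt' ψ⟩ = ⟨p.ι (Fin.init ψ), p.hlt _⟩ := by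
    intro ψ
    unfold mpar
    by_cases hb : ψ (Fin.last n) = false
    · have hv : ι' ψ = p.ι (Fin.init ψ) := by
        show (if ψ (Fin.last n) = false then p.ι (Fin.init ψ)
          else p.q.N + (e (Fin.init ψ) : ℕ)) = _
        rw [if_pos hb]
      rw [dif_pos (show ((⟨ι' ψ, hlt' ψ⟩ : Fin q'.N) : ℕ) < p.q.N from by
        simp only [hv]; exact p.hlt _)]
      apply Fin.ext
      exact hv
    · have hv : ι' ψ = p.q.N + (e (Fin.init ψ) : ℕ) := by
        show (if ψ (Fin.last n) = false then p.ι (Fin.init ψ)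
          else p.q.N + (e (Fin.init ψ) : ℕ)) = _
        rw [if_neg hb]
      rw [dif_neg (show ¬ ((⟨ι' ψ, hlt' ψ⟩ : Fin q'.N) : ℕ) < p.q.N from by
        simp only [hv]; omega)]
      have h3 : (⟨((⟨ι' ψ, hlt' ψ⟩ : Fin q'.N) : ℕ) - p.q.N, by
          have := hlt' ψ; omega⟩ : Fin (2 ^ n)) = e (Fin.init ψ) := by
        apply Fin.ext
        simp only [hv]
        omega
      rw [h3, hg]
      apply Fin.ext
      simp
  have hinj' : Function.Injective ι' := by
    intro ψ ψ' he
    have he : (if ψ (Fin.last n) = false then p.ι (Fin.init ψ)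
        else p.q.N + (e (Fin.init ψ) : ℕ)) =
      (if ψ' (Fin.last n) = false then p.ι (Fin.init ψ')
        else p.q.N + (e (Fin.init ψ') : ℕ)) := he
    have hsnoc : ∀ χ : Fin (n + 1) → Bool, Fin.snoc (Fin.init χ) (χ (Fin.last n)) = χ :=
      fun χ => Fin.snoc_init_self χ
    by_cases hb : ψ (Fin.last n) = false <;> by_cases hb' : ψ' (Fin.last n) = false
    · rw [if_pos hb, if_pos hb'] at he
      have h2 := p.hinj he
      rw [← hsnoc ψ, ← hsnoc ψ', h2, hb, hb']
    · rw [if_pos hb, if_neg hb'] at he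
      have := p.hlt (Fin.init ψ); omega
    · rw [if_neg hb, if_pos hb'] at he
      have := p.hlt (Fin.init ψ'); omega
    · rw [if_neg hb, if_neg hb'] at he
      have h2 : (e (Fin.init ψ) : ℕ) = (e (Fin.init ψ') : ℕ) := by omega
      have h3 : Fin.init ψ = Fin.init ψ' := e.injective (Fin.ext h2)
      have hbt : ψ (Fin.last n) = true := by revert hb; cases ψ (Fin.last n) <;> simp
      have hbt' : ψ' (Fin.last n) = true := by revert hb'; cases ψ' (Fin.last n) <;> simp
      rw [← hsnoc ψ, ← hsnoc ψ', h3, hbt, hbt']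
  refine ⟨⟨q', hq', ι', hlt', hinj', (hKM hpow).1, (hKM hpow).2⟩, ?_, ?_⟩
  · intro ψ
    have h1 := hs ⟨ι' ψ, hlt' ψ⟩
    rw [hmpar ψ] at h1
    exact h1
  · intro ψ ψ' hcond
    have hc2 : mpar p.q g hN ⟨ι' ψ, hlt' ψ⟩ ≠ mpar p.q g hN ⟨ι' ψ', hlt' ψ'⟩ ∨
        (⟨ι' ψ, hlt' ψ⟩ : Fin q'.N) = ⟨ι' ψ', hlt' ψ'⟩ := by
      rcases hcond with hc | hc
      · left
        rw [hmpar ψ, hmpar ψ']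
        intro hee
        exact hc (p.hinj (by simpa [Fin.ext_iff] using hee))
      · right
        subst hc
        rfl
    have h1 := hu _ _ hc2
    rw [hmpar ψ, hmpar ψ'] at h1
    exact h1

noncomputable def stages {G : Set Cfg} (hG : GoodSet f G) (p0 : StD G 0) :
    ∀ n : ℕ, StD G n
  | 0 => p0
  | n + 1 => (stStep f hG n (stages hG p0 n)).choose

lemma stages_link {G : Set Cfg} (hG : GoodSet f G) (p0 : StD G 0) (n : ℕ) :
    StLink (stages f hG p0 n) (stages f hG p0 (n + 1)) :=
  (stStep f hG n (stages f hG p0 n)).choose_spec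

end Construct

section Limit

variable (f : (ℕ → ℕ) → (ℕ → Bool) × (ℕ → Bool))
variable {G : Set Cfg} (hG : GoodSet f G) (p0 : StD G 0)

def rstr (a : ℕ → Bool) (n : ℕ) : Fin n → Bool := fun i => a i

lemma rstr_init (a : ℕ → Bool) (n : ℕ) : Fin.init (rstr a (n + 1)) = rstr a n := by
  funext i
  simp [Fin.init, rstr]

noncomputable def sN (n : ℕ) (ρ : Fin n → Bool) : List Bool :=
  (stages f hG p0 n).q.s ⟨(stages f hG p0 n).ι ρ, (stages f hG p0 n).hlt ρ⟩

noncomputable def uN (n : ℕ) (ρ σ : Fin n → Bool) : List ℕ :=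
  (stages f hG p0 n).q.u ⟨(stages f hG p0 n).ι ρ, (stages f hG p0 n).hlt ρ⟩
    ⟨(stages f hG p0 n).ι σ, (stages f hG p0 n).hlt σ⟩

lemma sN_link (n : ℕ) (ψ : Fin (n + 1) → Bool) :
    sN f hG p0 n (Fin.init ψ) <+: sN f hG p0 (n + 1) ψ :=
  (stages_link f hG p0 n).1 ψ

lemma uN_link (n : ℕ) (ψ ψ' : Fin (n + 1) → Bool)
    (h : Fin.init ψ ≠ Fin.init ψ' ∨ ψ = ψ') :
    uN f hG p0 n (Fin.init ψ) (Fin.init ψ') <+: uN f hG p0 (n + 1) ψ ψ' :=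
  (stages_link f hG p0 n).2 ψ ψ' h

lemma hOk (n : ℕ) : (stages f hG p0 n).q.Ok :=
  (hG.1 _ (stages f hG p0 n).hq).1

lemma hBase (n : ℕ) : CfgBase f (stages f hG p0 n).q :=
  (hG.1 _ (stages f hG p0 n).hq).2

lemma sN_len (n : ℕ) (ρ : Fin n → Bool) :
    (sN f hG p0 n ρ).length = (stages f hG p0 n).q.k := (hOk f hG p0 n).1 _

lemma uN_len (n : ℕ) (ρ σ : Fin n → Bool) :
    (uN f hG p0 n ρ σ).length = (stages f hG p0 n).q.m := (hOk f hG p0 n).2.1 _ _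

noncomputable def sfun (a : ℕ → Bool) (n : ℕ) : List Bool := sN f hG p0 n (rstr a n)

lemma sfun_mono (a : ℕ → Bool) (n : ℕ) : sfun f hG p0 a n <+: sfun f hG p0 a (n + 1) := by
  have h := sN_link f hG p0 n (rstr a (n + 1))
  rwa [rstr_init] at h

lemma sfun_chain (a : ℕ → Bool) {n n' : ℕ} (h : n ≤ n') :
    sfun f hG p0 a n <+: sfun f hG p0 a n' := by
  induction h with
  | refl => exact List.prefix_rfl
  | step h ih => exact ih.trans (sfun_mono f hG p0 a _)

lemma sfun_len (a : ℕ → Bool) (n : ℕ) :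
    (sfun f hG p0 a n).length = (stages f hG p0 n).q.k := sN_len f hG p0 n _

lemma sfun_len_ge (a : ℕ → Bool) (n : ℕ) : n ≤ (sfun f hG p0 a n).length := by
  rw [sfun_len]; exact (stages f hG p0 n).hk

noncomputable def eFun (a : ℕ → Bool) : ℕ → Bool := fun i =>
  (sfun f hG p0 a (i + 1)).getD i false

lemma prefix_e (a : ℕ → Bool) (n t : ℕ) (ht : t < (sfun f hG p0 a n).length) :
    (sfun f hG p0 a n)[t] = eFun f hG p0 a t := by
  have ht1 : t < (sfun f hG p0 a (t + 1)).length :=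
    lt_of_lt_of_le (Nat.lt_succ_self t) (sfun_len_ge f hG p0 a (t + 1))
  have he : eFun f hG p0 a t = (sfun f hG p0 a (t + 1))[t] :=
    List.getD_eq_getElem _ _ ht1
  rcases le_total n (t + 1) with h | h
  · rw [(sfun_chain f hG p0 a h).getElem ht, he]
  · rw [← (sfun_chain f hG p0 a h).getElem ht1, he]

lemma eFun_inj : Function.Injective (eFun f hG p0) := by
  intro a b hab
  by_contra hne
  obtain ⟨i, hi⟩ := Function.ne_iff.mp hne
  set n := i + 1 with hn
  have hr : rstr a n ≠ rstr b n := by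
    intro he
    exact hi (congrFun he ⟨i, Nat.lt_succ_self i⟩)
  have hι : (stages f hG p0 n).ι (rstr a n) ≠ (stages f hG p0 n).ι (rstr b n) :=
    (stages f hG p0 n).hinj.ne hr
  have hsne : sfun f hG p0 a n ≠ sfun f hG p0 b n := by
    intro he
    exact hι (by
      have := (hOk f hG p0 n).2.2 he
      simpa [Fin.ext_iff] using this)
  apply hsne
  apply List.ext_getElem
  · rw [sfun_len, sfun_len]
  · intro t h1 h2
    rw [prefix_e f hG p0 a n t h1, prefix_e f hG p0 b n t h2, hab]

lemma eFun_cont : Continuous (eFun f hG p0) := by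
  apply continuous_pi
  intro i
  have hfact : (fun a => eFun f hG p0 a i) =
      (fun ρ : Fin (i + 1) → Bool => (sN f hG p0 (i + 1) ρ).getD i false) ∘
        (fun a => rstr a (i + 1)) := rfl
  rw [hfact]
  apply Continuous.comp
  · exact continuous_of_discreteTopology
  · apply continuous_pi
    intro j
    exact continuous_apply _

lemma eFun_acc (a : ℕ → Bool) :
    AccPt (eFun f hG p0 a) (Filter.principal (Set.range (eFun f hG p0))) := by
  classical
  rw [accPt_iff_nhds]
  intro U hU
  set an : ℕ → (ℕ → Bool) := fun n => Function.update a n (!(a n)) with han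
  have htend : Filter.Tendsto an Filter.atTop (nhds a) := by
    rw [tendsto_pi_nhds]
    intro j
    apply Filter.Tendsto.congr' _ tendsto_const_nhds
    filter_upwards [Filter.eventually_gt_atTop j] with n hn
    rw [han]
    exact (Function.update_of_ne (show j ≠ n by omega) _ _).symm
  have htend2 := ((eFun_cont f hG p0).tendsto a).comp htend
  have hmem : ∀ᶠ n in Filter.atTop, eFun f hG p0 (an n) ∈ U := htend2.eventually_mem hU
  obtain ⟨n, hn⟩ := hmem.exists
  refine ⟨eFun f hG p0 (an n), ⟨hn, Set.mem_range_self _⟩, ?_⟩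
  intro he
  have : an n = a := eFun_inj f hG p0 he
  have h2 := congrFun this n
  rw [han] at h2
  simp at h2

lemma pair_mem (hf : Continuous f) (a b : ℕ → Bool) :
    ∃ ν, f ν = (eFun f hG p0 a, eFun f hG p0 b) := by
  classical
  obtain ⟨n0, hn0⟩ : ∃ n0, ∀ n, n0 ≤ n → (rstr a n ≠ rstr b n ∨ a = b) := by
    by_cases hab : a = b
    · exact ⟨0, fun n _ => Or.inr hab⟩
    · obtain ⟨i, hi⟩ := Function.ne_iff.mp hab
      refine ⟨i + 1, fun n hn => Or.inl (fun he => hi ?_)⟩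
      exact congrFun he ⟨i, by omega⟩
  set ufab : ℕ → List ℕ := fun n => uN f hG p0 n (rstr a n) (rstr b n) with hufab
  have ulen : ∀ n, (ufab n).length = (stages f hG p0 n).q.m := fun n => uN_len f hG p0 n _ _
  have ulen_ge : ∀ n, n ≤ (ufab n).length := fun n => by
    rw [ulen]; exact (stages f hG p0 n).hm
  have ulink : ∀ n, n0 ≤ n → ufab n <+: ufab (n + 1) := by
    intro n hn
    have hc : Fin.init (rstr a (n + 1)) ≠ Fin.init (rstr b (n + 1)) ∨
        rstr a (n + 1) = rstr b (n + 1) := by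
      rw [rstr_init, rstr_init]
      rcases hn0 n hn with h | h
      · exact Or.inl h
      · subst h; exact Or.inr rfl
    have h2 := uN_link f hG p0 n (rstr a (n + 1)) (rstr b (n + 1)) hc
    rw [rstr_init, rstr_init] at h2
    exact h2
  have uchain : ∀ n n', n0 ≤ n → n ≤ n' → ufab n <+: ufab n' := by
    intro n n' hn h
    induction h with
    | refl => exact List.prefix_rfl
    | @step nn h ih => exact ih.trans (ulink nn (le_trans hn h))
  set νf : ℕ → ℕ := fun i => (ufab (max n0 (i + 1))).getD i 0 with hνf
  have prefix_ν : ∀ n, n0 ≤ n → ∀ t, ∀ ht : t < (ufab n).length, (ufab n)[t] = νf t := by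
    intro n hn t ht
    have ht' : t < (ufab (max n0 (t + 1))).length := by
      have := ulen_ge (max n0 (t + 1))
      omega
    have he : νf t = (ufab (max n0 (t + 1)))[t] := List.getD_eq_getElem _ _ ht'
    rcases le_total n (max n0 (t + 1)) with h | h
    · rw [(uchain n _ hn h).getElem ht, he]
    · rw [← (uchain _ n (le_max_left _ _) h).getElem ht', he]
  have hwit : ∀ n, ∃ ν, prefS (ufab n) ν ∧ prefB (sfun f hG p0 a n) (f ν).1 ∧
      prefB (sfun f hG p0 b n) (f ν).2 := by
    intro n
    exact hBase f hG p0 n ⟨(stages f hG p0 n).ι (rstr a n), (stages f hG p0 n).hlt _⟩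
      ⟨(stages f hG p0 n).ι (rstr b n), (stages f hG p0 n).hlt _⟩
  choose νs hν1 hν2 hν3 using hwit
  have hten1 : Filter.Tendsto νs Filter.atTop (nhds νf) := by
    rw [tendsto_pi_nhds]
    intro i
    apply Filter.Tendsto.congr' _ tendsto_const_nhds
    filter_upwards [Filter.eventually_ge_atTop (max n0 (i + 1))] with n hn
    have hi : i < (ufab n).length := by
      have := ulen_ge n; omega
    rw [← hν1 n i hi, prefix_ν n (le_trans (le_max_left _ _) hn) i hi]
  have hten2 : Filter.Tendsto (fun n => f (νs n)) Filter.atTop (nhds (f νf)) :=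
    (hf.tendsto νf).comp hten1
  have h31 : Filter.Tendsto (fun n => (f (νs n)).1) Filter.atTop
      (nhds (eFun f hG p0 a)) := by
    rw [tendsto_pi_nhds]
    intro j
    apply Filter.Tendsto.congr' _ tendsto_const_nhds
    filter_upwards [Filter.eventually_ge_atTop (j + 1)] with n hn
    have hj : j < (sfun f hG p0 a n).length := by
      have := sfun_len_ge f hG p0 a n; omega
    rw [← hν2 n j hj, prefix_e f hG p0 a n j hj]
  have h32 : Filter.Tendsto (fun n => (f (νs n)).2) Filter.atTop
      (nhds (eFun f hG p0 b)) := by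
    rw [tendsto_pi_nhds]
    intro j
    apply Filter.Tendsto.congr' _ tendsto_const_nhds
    filter_upwards [Filter.eventually_ge_atTop (j + 1)] with n hn
    have hj : j < (sfun f hG p0 b n).length := by
      have := sfun_len_ge f hG p0 b n; omega
    rw [← hν3 n j hj, prefix_e f hG p0 b n j hj]
  have hten3 : Filter.Tendsto (fun n => f (νs n)) Filter.atTop
      (nhds (eFun f hG p0 a, eFun f hG p0 b)) := by
    rw [nhds_prod_eq]
    have := h31.prodMk h32
    simpa using this
  exact ⟨νf, tendsto_nhds_unique hten2 hten3⟩

end Limit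

/-- if `Pr_{ω₁}(λ)` (that is `Pr⁰_{ω₁}(λ; <ℵ₁, ℵ₀)`) and an analytic
set `B ⊆ 2^ω × 2^ω` contains a `λ`-square, then `B` contains a perfect square. -/
theorem stmt_8 (lam : Cardinal.{0})
    (hPr : Pr 0 (Cardinal.aleph 1).ord lam (Cardinal.aleph 1) ℵ₀)
    (B : Set ((ℕ → Bool) × (ℕ → Bool))) (hB : MeasureTheory.AnalyticSet B)
    (A : Set (ℕ → Bool)) (hA : Cardinal.mk A = lam) (hAB : A ×ˢ A ⊆ B) :
    ∃ P : Set (ℕ → Bool), Perfect P ∧ P.Nonempty ∧ P ×ˢ P ⊆ B := by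
  classical
  have h0ord : (0 : Ordinal.{0}) < (Cardinal.aleph 1).ord := by
    rw [← Cardinal.ord_zero]
    exact Cardinal.ord_lt_ord.mpr (lt_trans Cardinal.aleph0_pos Cardinal.aleph0_lt_aleph_one)
  by_cases hAne : A.Nonempty
  swap
  · -- A empty: Pr is contradictory for the empty structure on ↥A
    exfalso
    obtain ⟨w, -, hwne, -⟩ := hPr Lg ↥A (Str A (fun _ _ _ => 0)) hA Lg_card 0 h0ord
    obtain ⟨x, -⟩ := hwne
    exact hAne ⟨x.1, x.2⟩
  rw [MeasureTheory.AnalyticSet] at hB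
  rcases hB with hBe | ⟨f, hf, hfr⟩
  · -- B empty but A nonempty: contradiction
    exfalso
    obtain ⟨a, ha⟩ := hAne
    have : (a, a) ∈ B := hAB (Set.mem_prod.mpr ⟨ha, ha⟩)
    rw [hBe] at this
    exact this
  -- main case
  have hpair : ∀ x y : ↥A, ∃ ν, f ν = ((x : ℕ → Bool), (y : ℕ → Bool)) := by
    intro x y
    have hmem : ((x : ℕ → Bool), (y : ℕ → Bool)) ∈ B :=
      hAB (Set.mem_prod.mpr ⟨x.2, y.2⟩)
    rw [← hfr] at hmem
    exact hmem
  choose η hη using hpair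
  -- every β < ω₁ admits a nonempty configuration in D_β
  have hNe : ∀ β, β < (Cardinal.aleph 1).ord → ∃ q : Cfg, 0 < q.N ∧ Dmem f β q := by
    intro β hβ
    obtain ⟨w, hwfin, hwne, hwrk⟩ := hPr Lg ↥A (Str A η) hA Lg_card β hβ
    set l := hwfin.toFinset.toList with hl
    have hnd : l.Nodup := Finset.nodup_toList _
    have hmem : ∀ x, x ∈ l ↔ x ∈ w := fun x => by
      rw [hl, Finset.mem_toList, Set.Finite.mem_toFinset]
    set N := l.length with hN
    set c : Fin N → ↥A := l.get with hc
    have hcinj : Function.Injective c := List.nodup_iff_injective_get.mp hnd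
    have hcr : Set.range c = w := by
      ext x
      rw [← hmem]
      constructor
      · rintro ⟨i, rfl⟩
        exact List.get_mem l i
      · intro h
        obtain ⟨i, hi⟩ := List.mem_iff_get.mp h
        exact ⟨i, hi⟩
    obtain ⟨k0, hk0⟩ := sep_bound (fun i => (c i).1) (fun i j h => hcinj (Subtype.ext h))
    refine ⟨mkCfg A η c k0 0, ?_, sound f A η hη β w hwrk N c k0 0 hcinj hcr hk0⟩
    obtain ⟨x, hx⟩ := hwne
    have hxl : x ∈ l := (hmem x).mpr hx
    exact List.length_pos_iff.mpr (List.ne_nil_of_mem hxl)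
  -- stabilization below ω₁
  have hstab : ∃ δ, δ < (Cardinal.aleph 1).ord ∧
      ∀ q, Dmem f δ q → Dmem f (δ + 1) q := by
    by_contra hcon
    push_neg at hcon
    have hch : ∀ δ : Set.Iio (Cardinal.aleph 1).ord,
        ∃ q : Cfg, Dmem f δ.1 q ∧ ¬ Dmem f (δ.1 + 1) q := fun δ => hcon δ.1 δ.2
    choose F hF1 hF2 using hch
    have hFinj : Function.Injective F := by
      intro δ δ' he
      by_contra hne
      have hne' : δ.1 ≠ δ'.1 := fun h => hne (Subtype.ext h)
      rcases lt_or_gt_of_ne hne' with h | h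
      · have h1 : Dmem f (δ.1 + 1) (F δ') := Dmem_mono (by
          rw [Ordinal.add_one_eq_succ]
          exact Order.succ_le_of_lt h) (hF1 δ')
        rw [← he] at h1
        exact hF2 δ h1
      · have h1 : Dmem f (δ'.1 + 1) (F δ) := Dmem_mono (by
          rw [Ordinal.add_one_eq_succ]
          exact Order.succ_le_of_lt h) (hF1 δ)
        rw [he] at h1
        exact hF2 δ' h1
    have hcard : #(Set.Iio (Cardinal.aleph 1).ord) ≤ #(ULift.{1} Cfg) :=
      Cardinal.mk_le_of_injective (f := fun δ => ULift.up.{1} (F δ))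
        (fun x y h => hFinj (by simpa using h))
    rw [Ordinal.mk_Iio_ordinal, Cardinal.card_ord] at hcard
    have h3 : Cardinal.lift.{1, 0} (Cardinal.aleph 1) ≤ Cardinal.lift.{1, 0} ℵ₀ :=
      le_trans hcard (by rw [Cardinal.lift_aleph0]; exact Cardinal.mk_le_aleph0)
    exact absurd (Cardinal.lift_le.mp h3) (not_le.mpr Cardinal.aleph0_lt_aleph_one)
  obtain ⟨δ, hδ1, hδ2⟩ := hstab
  have hδsucc : δ < δ + 1 := by
    rw [Ordinal.add_one_eq_succ]
    exact Order.lt_succ δ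
  set G : Set Cfg := {q | Dmem f δ q} with hGdef
  have hGood : GoodSet f G := by
    constructor
    · intro q hq
      have hq' : Dmem f δ q := hq
      rw [Dmem] at hq'
      exact ⟨hq'.1, hq'.2.1⟩
    · intro q hq i0 K M
      have h2 : Dmem f (δ + 1) q := hδ2 q hq
      rw [Dmem] at h2
      obtain ⟨q', hq', hext⟩ := h2.2.2 δ hδsucc i0 K M
      exact ⟨q', hq', hext⟩
  obtain ⟨q0, hq0N, hq0D⟩ := hNe δ hδ1
  have hq0G : q0 ∈ G := hq0D
  set p0 : StD G 0 := ⟨q0, hq0G, fun _ => 0, fun _ => hq0N,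
    fun ρ σ _ => Subsingleton.elim ρ σ, Nat.zero_le _, Nat.zero_le _⟩ with hp0
  refine ⟨Set.range (eFun f hGood p0), ⟨?_, ?_⟩, ?_, ?_⟩
  · exact (isCompact_range (eFun_cont f hGood p0)).isClosed
  · intro x hx
    obtain ⟨a, rfl⟩ := hx
    exact eFun_acc f hGood p0 a
  · exact ⟨eFun f hGood p0 (fun _ => false), Set.mem_range_self _⟩
  · rintro ⟨x, y⟩ ⟨⟨a, rfl⟩, ⟨b, rfl⟩⟩
    obtain ⟨ν, hν⟩ := pair_mem f hGood p0 hf a b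
    rw [← hfr]
    exact ⟨ν, hν⟩

end Sh522
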